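/- Let H be an atomic monoid and a ∈ H with |R_a| ≥ 2. If z, z' ∈ Z(a) are factorizations with z not R-related to z', each minimal in its R-equivalence class with respect to length, then (z, z') is an atom of the monoid of relations M_H. -/

import Mathlib

open Multiset
open scoped Classical ENNReal

/-- The set of atoms (irreducible elements) of a reduced monoid `M`. -/
abbrev Atom (M : Type) [CancelCommMonoid M] : Type := {u : M // Irreducible u}

/-- The factorization homomorphism `π : Z(H) → H`, where the factorization monoid
`Z(H)` is realized as the free commutative monoid (multiset) over the atoms. -/
def fprod {M : Type} [CancelCommMonoid M] (z : Multiset (Atom M)) : M :=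
  (z.map Subtype.val).prod

/-- The set of factorizations `Z(a)` of `a`. -/
def Zf {M : Type} [CancelCommMonoid M] (a : M) : Set (Multiset (Atom M)) :=
  {z | fprod z = a}

/-- `M` is reduced: the only unit is `1`. -/
def Reduced (M : Type) [CancelCommMonoid M] : Prop := ∀ u : M, IsUnit u → u = 1

/-- `M` is atomic: every non-unit is a product of atoms. -/
def Atomic (M : Type) [CancelCommMonoid M] : Prop :=
  ∀ a : M, ¬ IsUnit a → ∃ z : Multiset (Atom M), fprod z = a

/-- The distance between two factorizations. -/
noncomputable def fdist {M : Type} [CancelCommMonoid M] (z z' : Multiset (Atom M)) : ℕ :=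
  max (card (z - z')) (card (z' - z))

/-- The catenary degree `c(a)`: the least `N` such that any two factorizations of `a`
can be concatenated by an `N`-chain of factorizations of `a`. -/
noncomputable def cat {M : Type} [CancelCommMonoid M] (a : M) : ℕ∞ :=
  sInf {N : ℕ∞ | ∀ z ∈ Zf a, ∀ z' ∈ Zf a,
    Relation.ReflTransGen (fun u v => v ∈ Zf a ∧ (fdist u v : ℕ∞) ≤ N) z z'}

/-- The catenary degree `c(H)`. -/
noncomputable def catH (M : Type) [CancelCommMonoid M] : ℕ∞ := ⨆ a : M, cat a

/-- The `R`-relation on factorizations of `a`: two factorizations are `R`-related if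
they can be joined by a chain of factorizations of `a` whose consecutive members have a
common atom (the degenerate case `z = z' = 1` is the reflexivity case). -/
def RRel {M : Type} [CancelCommMonoid M] (a : M) :
    Multiset (Atom M) → Multiset (Atom M) → Prop :=
  Relation.ReflTransGen (fun u v => u ∈ Zf a ∧ v ∈ Zf a ∧ u ∩ v ≠ 0)

/-- `|R_a| ≥ 2`: `a` has at least two `R`-equivalence classes of factorizations. -/
def TwoClasses {M : Type} [CancelCommMonoid M] (a : M) : Prop :=
  ∃ z ∈ Zf a, ∃ z' ∈ Zf a, ¬ RRel a z z'

/-- `μ(a)`: the supremum over the `R`-classes `ρ` of `Z(a)` of `min {|z| : z ∈ ρ}`. -/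
noncomputable def mu {M : Type} [CancelCommMonoid M] (a : M) : ℕ∞ :=
  ⨆ z ∈ Zf a, ⨅ w ∈ {w | w ∈ Zf a ∧ RRel a z w}, (card w : ℕ∞)

/-- `μ(H) = sup {μ(a) : a ∈ H, |R_a| ≥ 2}`. -/
noncomputable def muH (M : Type) [CancelCommMonoid M] : ℕ∞ :=
  ⨆ a : M, ⨆ (_ : TwoClasses a), mu a

/-- The monoid of relations `M_H ⊆ Z(H) × Z(H)`. -/
def MHset (M : Type) [CancelCommMonoid M] :
    Set (Multiset (Atom M) × Multiset (Atom M)) :=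
  {p | fprod p.1 = fprod p.2}

/-- Atoms of the (reduced) monoid of relations `M_H`. -/
def IsRelAtom {M : Type} [CancelCommMonoid M]
    (p : Multiset (Atom M) × Multiset (Atom M)) : Prop :=
  p ∈ MHset M ∧ p ≠ 0 ∧
    ∀ q r, q ∈ MHset M → r ∈ MHset M → p = q + r → q = 0 ∨ r = 0


lemma fprod_add {M : Type} [CancelCommMonoid M] (x y : Multiset (Atom M)) :
    fprod (x + y) = fprod x * fprod y := by
  simp [fprod]

lemma eq_zero_of_fprod_eq_one {M : Type} [CancelCommMonoid M]
    (w : Multiset (Atom M)) (h : fprod w = 1) : w = 0 := by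
  by_contra h0
  obtain ⟨u, hu⟩ := Multiset.exists_mem_of_ne_zero h0
  have hw : w = u ::ₘ w.erase u := (Multiset.cons_erase hu).symm
  rw [hw] at h
  simp only [fprod, Multiset.map_cons, Multiset.prod_cons] at h
  exact u.2.not_isUnit (IsUnit.of_mul_eq_one _ h)

/-- If `a` has two factorizations `z, z'` which are not `R`-related and are each of
minimal length in their `R`-class, then `(z, z')` is an atom of the monoid of
relations `M_H`. -/
theorem minimal_pair_isRelAtom (M : Type) [CancelCommMonoid M]
    (hred : Reduced M) (hat : Atomic M)
    (a : M) (h2 : TwoClasses a) (z z' : Multiset (Atom M))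
    (hz : z ∈ Zf a) (hz' : z' ∈ Zf a) (hnr : ¬ RRel a z z')
    (hmin : ∀ w ∈ Zf a, RRel a z w → card z ≤ card w)
    (hmin' : ∀ w ∈ Zf a, RRel a z' w → card z' ≤ card w) :
    IsRelAtom (z, z') := by
  refine ⟨hz.trans hz'.symm, ?_, ?_⟩
  · intro h
    rw [Prod.ext_iff] at h
    have hzz : z = z' := h.1.trans h.2.symm
    exact hnr (hzz ▸ Relation.ReflTransGen.refl)
  · intro q r hq hr heq
    by_contra hcon
    push_neg at hcon
    obtain ⟨hq0, hr0⟩ := hcon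
    have hz1 : z = q.1 + r.1 := congrArg Prod.fst heq
    have hz2 : z' = q.2 + r.2 := congrArg Prod.snd heq
    have hqq : fprod q.1 = fprod q.2 := hq
    have hrr : fprod r.1 = fprod r.2 := hr
    have hq1 : q.1 ≠ 0 := by
      intro h0
      have h2' : q.2 = 0 := eq_zero_of_fprod_eq_one _ (by
        rw [← hqq, h0]; simp [fprod])
      exact hq0 (Prod.ext h0 h2')
    have hr2 : r.2 ≠ 0 := by
      intro h0
      have h1' : r.1 = 0 := eq_zero_of_fprod_eq_one _ (by
        rw [hrr, h0]; simp [fprod])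
      exact hr0 (Prod.ext h1' h0)
    have hw : (q.1 + r.2) ∈ Zf a := by
      have : fprod (q.1 + r.2) = fprod z' := by
        rw [fprod_add, hqq, hz2, fprod_add]
      simpa [Zf, this] using hz'
    apply hnr
    have step1 : z ∩ (q.1 + r.2) ≠ 0 := by
      intro h0
      apply hq1
      have h1 : q.1 ≤ z ∩ (q.1 + r.2) :=
        le_inf (hz1 ▸ Multiset.le_add_right _ _) (Multiset.le_add_right _ _)
      rw [h0] at h1
      exact Multiset.le_zero.mp h1
    have step2 : (q.1 + r.2) ∩ z' ≠ 0 := by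
      intro h0
      apply hr2
      have h1 : r.2 ≤ (q.1 + r.2) ∩ z' :=
        le_inf (Multiset.le_add_left _ _) (hz2 ▸ Multiset.le_add_left _ _)
      rw [h0] at h1
      exact Multiset.le_zero.mp h1
    exact Relation.ReflTransGen.tail
      (Relation.ReflTransGen.single ⟨hz, hw, step1⟩) ⟨hw, hz', step2⟩
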